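/- arXiv:2210.02251 — 3 statements merged into one kernel-verified Lean document; each statement's English description precedes it below -/
import Mathlib

section
/- Let E be a complex manifold, T_A a singular holomorphic foliation of rank one on E, and D̃ a submanifold of E. If D̃ is not invariant by T_A (i.e., some local vector field defining T_A fails to be everywhere tangent to D̃), then there exists a Zariski-dense subset W̃ of D̃ \ Sing(T_A) such that for every e₀ ∈ W̃ there exists a leaf Σ̃ of T_A through e₀ with Σ̃ ∩ D̃ = {e₀}. -/
open Metric

/-!
STATEMENT 3: Part (2) of Lemma 3.6 of the paper.

Local model: `E` is an open set `U ⊆ ℂ^n`; the rank one singular holomorphic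
foliation `T_A` is generated by a holomorphic vector field `Z` on `U`, whose
singular set is `Sing = {Z = 0}`, and whose leaves through regular points are
the orbits of the local (complex time) flow of `Z`, i.e. images of solutions
of `γ' = Z ∘ γ`.  The submanifold `D̃` is the smooth hypersurface cut out by
a holomorphic equation `g` with nonvanishing differential along `{g = 0}`
(we take it connected/irreducible).  *Non-invariance* of `D̃` by `T_A` means
that the generator `Z` fails to be tangent to `D̃` at some point,
i.e. `(dg)(Z) ≠ 0` somewhere on `D̃`.

Conclusion: the set `W̃` of points `e₀` of `D̃ ∖ Sing(T_A)` through which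
there is a leaf `Σ̃` of `T_A` with `Σ̃ ∩ D̃ = {e₀}` is (Zariski-)dense in `D̃`:
every point of `D̃` lies in the closure of `W̃`.
-/

section Auxiliary
open Filter Set Topology NNReal ENNReal


variable {F : Type*} [NormedAddCommGroup F] [NormedSpace ℂ F] [CompleteSpace F]

/-- A holomorphic function on a disc has a primitive on the disc. -/
theorem exists_primitive_on_ball {R : ℝ} (hR : 0 < R) {f : ℂ → F}
    (hf : DifferentiableOn ℂ f (ball (0 : ℂ) R)) :
    ∃ P : ℂ → F, P 0 = 0 ∧ ∀ t ∈ ball (0 : ℂ) R, HasDerivAt P (f t) t := by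
  have hball : ∀ {s : ℝ}, 0 < s → s < R →
      HasFPowerSeriesOnBall f (cauchyPowerSeries f 0 s.toNNReal) 0 s.toNNReal := by
    intro s hs hsR
    refine DifferentiableOn.hasFPowerSeriesOnBall ?_ (by simpa using hs)
    refine hf.mono ?_
    intro z hz
    simp only [mem_closedBall, mem_ball] at hz ⊢
    calc dist z 0 ≤ (s.toNNReal : ℝ) := hz
      _ < R := by rwa [Real.coe_toNNReal s hs.le]
  set p := cauchyPowerSeries f 0 (R/2).toNNReal with hp
  have hps : HasFPowerSeriesOnBall f p 0 (R/2).toNNReal := hball (by positivity) (by linarith)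
  set a : ℕ → F := fun k => p.coeff k with ha
  refine ⟨fun t => ∑' (k : ℕ), ((((k : ℂ) + 1)⁻¹ * t ^ (k + 1)) • a k), by simp, ?_⟩
  intro t ht
  -- choose intermediate radii ‖t‖ < r < r' < R
  obtain ⟨r, htr, hrR⟩ := exists_between (mem_ball_zero_iff.1 ht)
  obtain ⟨r', hrr', hr'R⟩ := exists_between hrR
  have hr0 : 0 ≤ r := le_trans (norm_nonneg t) htr.le
  have hr'0 : 0 < r' := lt_of_le_of_lt hr0 hrr'
  have hq : HasFPowerSeriesOnBall f (cauchyPowerSeries f 0 r'.toNNReal) 0 r'.toNNReal :=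
    hball hr'0 hr'R
  have hpq : p = cauchyPowerSeries f 0 r'.toNNReal :=
    hps.hasFPowerSeriesAt.eq_formalMultilinearSeries hq.hasFPowerSeriesAt
  have hrad : (r.toNNReal : ℝ≥0∞) < p.radius := by
    refine lt_of_lt_of_le ?_ (hpq ▸ hq.r_le)
    rw [ENNReal.coe_lt_coe, ← NNReal.coe_lt_coe, Real.coe_toNNReal r hr0,
      Real.coe_toNNReal r' hr'0.le]
    exact hrr'
  have hsum : Summable fun k => ‖p k‖ * r ^ k := by
    have := p.summable_norm_mul_pow hrad
    simpa [Real.coe_toNNReal r hr0] using this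
  have hcoeff : ∀ k, ‖a k‖ ≤ ‖p k‖ := by
    intro k
    have h := (p k).le_opNorm (fun _ => (1 : ℂ))
    simp only [norm_one, Finset.prod_const_one, mul_one] at h
    exact h
  have hasum : Summable fun k => ‖a k‖ * r ^ k :=
    hsum.of_nonneg_of_le (fun k => by positivity)
      (fun k => mul_le_mul_of_nonneg_right (hcoeff k) (by positivity))
  have key : HasDerivAt (fun t : ℂ => ∑' (k : ℕ), ((((k : ℂ) + 1)⁻¹ * t ^ (k + 1)) • a k))
      (∑' k, t ^ k • a k) t := by
    refine hasDerivAt_tsum_of_isPreconnected hasum (isOpen_ball (x := (0:ℂ)) (ε := r))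
      (convex_ball (0:ℂ) r).isPreconnected
      (g' := fun k y => y ^ k • a k) (fun k y _ => ?_) (fun k y hy => ?_)
      (mem_ball_self (lt_of_le_of_lt (norm_nonneg t) htr)) ?_ (mem_ball_zero_iff.2 htr)
    · have h1 := ((hasDerivAt_pow (k+1) y).const_mul (((k : ℂ) + 1)⁻¹)).smul_const (a k)
      have h2 : ((k : ℂ) + 1)⁻¹ * (↑(k + 1) * y ^ (k + 1 - 1)) = y ^ k := by
        rw [Nat.add_sub_cancel, Nat.cast_add, Nat.cast_one, ← mul_assoc,
          inv_mul_cancel₀ (Nat.cast_add_one_ne_zero k), one_mul]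
      rwa [h2] at h1
    · have hy' : ‖y‖ ≤ r := (mem_ball_zero_iff.1 hy).le
      calc ‖y ^ k • a k‖ = ‖y‖ ^ k * ‖a k‖ := by simp [norm_smul]
        _ ≤ r ^ k * ‖a k‖ :=
            mul_le_mul_of_nonneg_right (pow_le_pow_left₀ (norm_nonneg y) hy' k) (norm_nonneg _)
        _ = ‖a k‖ * r ^ k := mul_comm _ _
    · have hz : (fun k : ℕ => ((((k : ℂ) + 1)⁻¹ * (0:ℂ) ^ (k + 1)) • a k)) = fun _ => (0 : F) := by
        funext k; simp
      rw [hz]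
      exact summable_zero
  have hfval : HasSum (fun k => t ^ k • a k) (f t) := by
    have hmem : t ∈ Metric.eball (0 : ℂ) r'.toNNReal := by
      rw [Metric.mem_eball, edist_zero_right, ← ofReal_norm,
        show ((r'.toNNReal : ℝ≥0∞)) = ENNReal.ofReal r' from rfl]
      exact (ENNReal.ofReal_lt_ofReal_iff hr'0).2 (htr.trans hrr')
    have := hq.hasSum hmem
    rw [← hpq] at this
    simpa [FormalMultilinearSeries.apply_eq_pow_smul_coeff] using this
  rwa [hfval.tsum_eq] at key

/-- Local existence of holomorphic (complex-time) integral curves of an analytic vector field. -/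
theorem exists_holomorphic_integral_curve {U : Set F} (hU : IsOpen U) {Z : F → F}
    (hZ : AnalyticOnNhd ℂ Z U) {e₀ : F} (he₀ : e₀ ∈ U) :
    ∃ ε > (0 : ℝ), ∃ γ : ℂ → F, γ 0 = e₀ ∧
      ∀ t ∈ ball (0 : ℂ) ε, γ t ∈ U ∧ HasDerivAt γ (Z (γ t)) t := by
  classical
  -- Lipschitz constant near e₀
  obtain ⟨L, t0, ht0, hLip0⟩ := ((hZ e₀ he₀).contDiffAt (n := 1)).exists_lipschitzOnWith
  obtain ⟨ρ, hρ0, hρ⟩ := nhds_basis_closedBall.mem_iff.1 (inter_mem (hU.mem_nhds he₀) ht0)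
  set K := closedBall e₀ ρ with hK
  have hKU : K ⊆ U := fun x hx => (hρ hx).1
  have hLip : LipschitzOnWith L Z K := hLip0.mono fun x hx => (hρ hx).2
  set M : ℝ := ‖Z e₀‖ + L * ρ with hM
  have hM0 : 0 ≤ M := by positivity
  have hZbound : ∀ x ∈ K, ‖Z x‖ ≤ M := by
    intro x hx
    have h1 : ‖Z x - Z e₀‖ ≤ L * ‖x - e₀‖ := by
      have := hLip.dist_le_mul x hx e₀ (mem_closedBall_self hρ0.le)
      simpa [dist_eq_norm] using this
    have h2 : ‖x - e₀‖ ≤ ρ := by simpa [dist_eq_norm] using (mem_closedBall.1 hx)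
    calc ‖Z x‖ ≤ ‖Z e₀‖ + ‖Z x - Z e₀‖ := by
          simpa using norm_add_le (Z e₀) (Z x - Z e₀)
      _ ≤ ‖Z e₀‖ + L * ρ := by
          have := h1.trans (mul_le_mul_of_nonneg_left h2 L.2)
          linarith
  set ε : ℝ := min (ρ / (M + 1)) (1 / (2 * (L + 1))) with hε
  have hε0 : 0 < ε := by
    refine lt_min (by positivity) (by positivity)
  have hMε : M * ε ≤ ρ := by
    have h1 : ε ≤ ρ / (M + 1) := min_le_left _ _
    have : M * ε ≤ M * (ρ / (M + 1)) := mul_le_mul_of_nonneg_left h1 hM0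
    refine this.trans ?_
    rw [mul_div_assoc']
    rw [div_le_iff₀ (by positivity)]
    nlinarith
  have hLε : (L : ℝ) * ε ≤ 1 / 2 := by
    have h1 : ε ≤ 1 / (2 * (L + 1)) := min_le_right _ _
    have : (L : ℝ) * ε ≤ L * (1 / (2 * (L + 1))) := mul_le_mul_of_nonneg_left h1 L.2
    refine this.trans ?_
    rw [mul_one_div, div_le_div_iff₀ (by positivity) two_pos]
    have hL0 : (0:ℝ) ≤ L := L.2
    nlinarith
  set B := ball (0 : ℂ) ε with hB
  have h0B : (0 : ℂ) ∈ B := mem_ball_self hε0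
  -- the "good" predicate and the Picard operator
  set Good : (ℂ → F) → Prop :=
    fun γ => γ 0 = e₀ ∧ DifferentiableOn ℂ γ B ∧ ∀ t ∈ B, γ t ∈ K with hGoodDef
  set T : (ℂ → F) → ℂ → F := fun γ =>
    if h : DifferentiableOn ℂ (fun t => Z (γ t)) B then
      fun t => e₀ + Classical.choose (exists_primitive_on_ball hε0 h) t
    else fun _ => e₀ with hT
  have hTspec : ∀ γ, Good γ →
      Good (T γ) ∧ (∀ t ∈ B, HasDerivAt (T γ) (Z (γ t)) t) := by
    rintro γ ⟨h0, hdiff, hmem⟩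
    have hZγ : DifferentiableOn ℂ (fun t => Z (γ t)) B :=
      (hZ.differentiableOn.comp hdiff (fun t ht => hKU (hmem t ht)))
    obtain ⟨hP0, hPd⟩ := Classical.choose_spec (exists_primitive_on_ball hε0 hZγ)
    set P := Classical.choose (exists_primitive_on_ball hε0 hZγ) with hPdef
    have hTeq : T γ = fun t => e₀ + P t := by rw [hT]; simp only [dif_pos hZγ]; rfl
    have hTd : ∀ t ∈ B, HasDerivAt (T γ) (Z (γ t)) t := by
      intro t ht
      rw [hTeq]
      exact (hPd t ht).const_add e₀
    have hT0 : T γ 0 = e₀ := by rw [hTeq]; simp [hP0]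
    refine ⟨⟨hT0, fun t ht => ((hTd t ht).differentiableAt).differentiableWithinAt, ?_⟩, hTd⟩
    intro t ht
    have hbd := Convex.norm_image_sub_le_of_norm_hasDerivWithin_le
      (f := T γ) (f' := fun t => Z (γ t)) (C := M) (s := B)
      (fun y hy => (hTd y hy).hasDerivWithinAt)
      (fun y hy => hZbound _ (hmem y hy)) (convex_ball _ _) h0B ht
    rw [hT0] at hbd
    have : ‖T γ t - e₀‖ ≤ M * ε := by
      refine hbd.trans ?_
      have : ‖t - 0‖ ≤ ε := by
        simpa using (mem_ball_zero_iff.1 ht).le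
      exact mul_le_mul_of_nonneg_left this hM0
    exact mem_closedBall_iff_norm.2 (this.trans hMε)
  have hcontr : ∀ γ₁ γ₂, Good γ₁ → Good γ₂ → ∀ δ : ℝ, 0 ≤ δ →
      (∀ t ∈ B, ‖γ₁ t - γ₂ t‖ ≤ δ) → ∀ t ∈ B, ‖T γ₁ t - T γ₂ t‖ ≤ δ / 2 := by
    intro γ₁ γ₂ hg₁ hg₂ δ hδ hbound t ht
    obtain ⟨hGood₁, hTd₁⟩ := hTspec γ₁ hg₁
    obtain ⟨hGood₂, hTd₂⟩ := hTspec γ₂ hg₂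
    have hder : ∀ y ∈ B, HasDerivAt (fun s => T γ₁ s - T γ₂ s)
        (Z (γ₁ y) - Z (γ₂ y)) y := fun y hy => (hTd₁ y hy).sub (hTd₂ y hy)
    have hbd := Convex.norm_image_sub_le_of_norm_hasDerivWithin_le
      (f := fun s => T γ₁ s - T γ₂ s) (f' := fun y => Z (γ₁ y) - Z (γ₂ y)) (C := L * δ) (s := B)
      (fun y hy => (hder y hy).hasDerivWithinAt)
      (fun y hy => by
        have h1 : ‖Z (γ₁ y) - Z (γ₂ y)‖ ≤ L * ‖γ₁ y - γ₂ y‖ := by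
          have := hLip.dist_le_mul (γ₁ y) (hg₁.2.2 y hy) (γ₂ y) (hg₂.2.2 y hy)
          simpa [dist_eq_norm] using this
        exact h1.trans (mul_le_mul_of_nonneg_left (hbound y hy) L.2))
      (convex_ball _ _) h0B ht
    simp only [hGood₁.1, hGood₂.1, sub_self, sub_zero] at hbd
    have htle : ‖t - 0‖ ≤ ε := by simpa using (mem_ball_zero_iff.1 ht).le
    have htle' : ‖t‖ ≤ ε := by simpa using (mem_ball_zero_iff.1 ht).le
    calc ‖T γ₁ t - T γ₂ t‖ ≤ L * δ * ‖t‖ := hbd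
      _ ≤ L * δ * ε := mul_le_mul_of_nonneg_left htle' (by positivity)
      _ = (L * ε) * δ := by ring
      _ ≤ (1/2) * δ := mul_le_mul_of_nonneg_right hLε hδ
      _ = δ / 2 := by ring
  -- the Picard iterates
  set γs : ℕ → ℂ → F := fun k => T^[k] (fun _ => e₀) with hγs
  have hγs0 : γs 0 = fun _ => e₀ := rfl
  have hγsS : ∀ k, γs (k + 1) = T (γs k) := by
    intro k; rw [hγs]; simp [Function.iterate_succ_apply']
  have hGoods : ∀ k, Good (γs k) := by
    intro k
    induction k with
    | zero => exact ⟨rfl, differentiableOn_const _, fun t _ => mem_closedBall_self hρ0.le⟩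
    | succ k ih => rw [hγsS k]; exact (hTspec _ ih).1
  set d : ℕ → ℂ → F := fun k t => γs (k + 1) t - γs k t with hd
  have hdbound : ∀ k, ∀ t ∈ B, ‖d k t‖ ≤ (M * ε) * (1 / 2) ^ k := by
    intro k
    induction k with
    | zero =>
      intro t ht
      have hTd := (hTspec _ (hGoods 0)).2
      have hbd := Convex.norm_image_sub_le_of_norm_hasDerivWithin_le
        (f := γs 1) (f' := fun y => Z (γs 0 y)) (C := M) (s := B)
        (fun y hy => by rw [hγsS 0]; exact (hTd y hy).hasDerivWithinAt)
        (fun y hy => hZbound _ ((hGoods 0).2.2 y hy)) (convex_ball _ _) h0B ht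
      have h10 : γs 1 0 = e₀ := (hGoods 1).1
      have h00 : γs 0 t = e₀ := rfl
      have htle : ‖t - 0‖ ≤ ε := by simpa using (mem_ball_zero_iff.1 ht).le
      calc ‖d 0 t‖ = ‖γs 1 t - γs 1 0‖ := by rw [h10]; rfl
        _ ≤ M * ‖t - 0‖ := hbd
        _ ≤ M * ε := mul_le_mul_of_nonneg_left htle hM0
        _ = (M * ε) * (1 / 2) ^ 0 := by ring
    | succ k ih =>
      intro t ht
      have := hcontr (γs (k+1)) (γs k) (hGoods (k+1)) (hGoods k)
        ((M * ε) * (1 / 2) ^ k) (by positivity) ih t ht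
      rw [← hγsS (k+1), ← hγsS k] at this
      calc ‖d (k+1) t‖ ≤ ((M * ε) * (1 / 2) ^ k) / 2 := this
        _ = (M * ε) * (1 / 2) ^ (k + 1) := by ring
  have husum : Summable (fun k : ℕ => (M * ε) * (1 / 2) ^ k) :=
    (summable_geometric_of_lt_one (by norm_num) (by norm_num)).mul_left _
  -- uniform limit
  set S : ℂ → F := fun t => ∑' k, d k t with hS
  set γ : ℂ → F := fun t => e₀ + S t with hγdef
  have hpartial : ∀ N t, γs N t = e₀ + ∑ j ∈ Finset.range N, d j t := by
    intro N t
    have h := Finset.sum_range_sub (f := fun k => γs k t) N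
    have h0 : γs 0 t = e₀ := rfl
    calc γs N t = e₀ + (γs N t - γs 0 t) := by rw [h0]; abel
      _ = e₀ + ∑ j ∈ Finset.range N, d j t := by rw [← h]
  have htendS : TendstoUniformlyOn (fun N t => ∑ j ∈ Finset.range N, d j t) S atTop B :=
    tendstoUniformlyOn_tsum_nat husum (fun k t ht => hdbound k t ht)
  have htendγ : TendstoUniformlyOn γs γ atTop B := by
    rw [Metric.tendstoUniformlyOn_iff] at htendS ⊢
    intro u hu
    filter_upwards [htendS u hu] with N hN t ht
    have h := hN t ht
    rw [hpartial]
    simpa [hγdef, dist_add_left] using h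
  -- the limit curve has the required properties
  have hdiffs : ∀ᶠ k in atTop, DifferentiableOn ℂ (γs k) B :=
    Eventually.of_forall fun k => (hGoods k).2.1
  have htlu : TendstoLocallyUniformlyOn γs γ atTop B := htendγ.tendstoLocallyUniformlyOn
  have hγdiff : DifferentiableOn ℂ γ B := htlu.differentiableOn hdiffs isOpen_ball
  have hderiv : TendstoLocallyUniformlyOn (deriv ∘ γs) (deriv γ) atTop B :=
    htlu.deriv hdiffs isOpen_ball
  refine ⟨ε, hε0, γ, ?_, ?_⟩
  · have : γs 0 0 = e₀ := rfl
    have h0 : Tendsto (fun k => γs k 0) atTop (nhds (γ 0)) := htendγ.tendsto_at h0B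
    have h0' : Tendsto (fun k => γs k 0) atTop (nhds e₀) := by
      have : (fun k => γs k 0) = fun _ => e₀ := by
        funext k; exact (hGoods k).1
      rw [this]; exact tendsto_const_nhds
    exact tendsto_nhds_unique h0 h0'
  · intro t ht
    have hmemγ : γ t ∈ K := by
      refine isClosed_closedBall.mem_of_tendsto (htendγ.tendsto_at ht) ?_
      exact Eventually.of_forall fun k => (hGoods k).2.2 t ht
    refine ⟨hKU hmemγ, ?_⟩
    have hda : DifferentiableAt ℂ γ t :=
      (hγdiff t ht).differentiableAt (isOpen_ball.mem_nhds ht)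
    have h1 : Tendsto (fun k => deriv (γs k) t) atTop (nhds (deriv γ t)) :=
      hderiv.tendsto_at ht
    have h2 : Tendsto (fun k => deriv (γs (k + 1)) t) atTop (nhds (deriv γ t)) :=
      h1.comp (tendsto_add_atTop_nat 1)
    have h3 : (fun k => deriv (γs (k + 1)) t) = fun k => Z (γs k t) := by
      funext k
      rw [hγsS k]
      exact ((hTspec _ (hGoods k)).2 t ht).deriv
    rw [h3] at h2
    have h4 : Tendsto (fun k => Z (γs k t)) atTop (nhds (Z (γ t))) := by
      have hc : ContinuousAt Z (γ t) := (hZ _ (hKU hmemγ)).continuousAt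
      exact hc.tendsto.comp (htendγ.tendsto_at ht)
    have h5 : deriv γ t = Z (γ t) := tendsto_nhds_unique h2 h4
    have := hda.hasDerivAt
    rwa [h5] at this

/-- If an analytic function vanishes on `D` near points accumulating at `x₀ ∈ D`,
it vanishes on `D` near `x₀`.  Here `D = {g = 0} ∩ U` is a smooth hypersurface. -/
theorem vanishing_propagates {n : ℕ} {U : Set (Fin n → ℂ)} (hU : IsOpen U)
    {g : (Fin n → ℂ) → ℂ} (hg : AnalyticOnNhd ℂ g U)
    {h : (Fin n → ℂ) → ℂ} (hh : AnalyticOnNhd ℂ h U)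
    {D : Set (Fin n → ℂ)} (hD : D = {x ∈ U | g x = 0})
    {x₀ : Fin n → ℂ} (hx₀D : x₀ ∈ D) (hdg : fderiv ℂ g x₀ ≠ 0)
    (hx₀cl : x₀ ∈ closure {x | x ∈ D ∧ ∃ v ∈ 𝓝 x, ∀ y ∈ v ∩ D, h y = 0}) :
    x₀ ∈ {x | x ∈ D ∧ ∃ v ∈ 𝓝 x, ∀ y ∈ v ∩ D, h y = 0} := by
  classical
  set A := {x | x ∈ D ∧ ∃ v ∈ 𝓝 x, ∀ y ∈ v ∩ D, h y = 0} with hA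
  have hx₀U : x₀ ∈ U := by rw [hD] at hx₀D; exact hx₀D.1
  have hgx₀ : g x₀ = 0 := by rw [hD] at hx₀D; exact hx₀D.2
  -- find a coordinate direction along which dg does not vanish
  obtain ⟨i₀, hi₀⟩ : ∃ i₀, fderiv ℂ g x₀ (Pi.single i₀ 1) ≠ 0 := by
    by_contra hcon
    push_neg at hcon
    apply hdg
    ext v
    have hv : v = ∑ i, v i • (Pi.single i 1 : Fin n → ℂ) := by
      funext j
      simp [Pi.single_apply, Finset.sum_ite_eq']
    rw [hv]
    simp [hcon]
  -- the chart map
  set Φ : (Fin n → ℂ) → Fin n → ℂ := fun x j => if j = i₀ then g x else x j with hΦdef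
  have hΦ : AnalyticAt ℂ Φ x₀ := by
    apply AnalyticAt.pi
    intro j
    by_cases hj : j = i₀
    · simp only [hΦdef, if_pos hj]
      exact hg x₀ hx₀U
    · simp only [hΦdef, if_neg hj]
      exact (ContinuousLinearMap.proj (R := ℂ) (φ := fun _ : Fin n => ℂ) j).analyticAt x₀
  set A' : (Fin n → ℂ) →L[ℂ] (Fin n → ℂ) := ContinuousLinearMap.pi
    (fun j => if j = i₀ then fderiv ℂ g x₀ else ContinuousLinearMap.proj j) with hA'
  have hfd' : HasFDerivAt Φ A' x₀ := by
    rw [hA']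
    apply hasFDerivAt_pi''
    intro j
    by_cases hj : j = i₀
    · subst hj
      have : (fun x : Fin n → ℂ => Φ x j) = g := by funext x; simp [hΦdef]
      rw [this]
      have hfd := (hg x₀ hx₀U).differentiableAt.hasFDerivAt
      convert hfd using 1
      ext v
      simp
    · have : (fun x : Fin n → ℂ => Φ x j) = fun x => x j := by funext x; simp [hΦdef, hj]
      rw [this]
      have := hasFDerivAt_apply (𝕜 := ℂ) (F' := fun _ : Fin n => ℂ) j x₀
      refine this.congr_fderiv ?_
      ext v
      simp [hj]
  have hinj : Function.Injective A' := by
    intro v w hvw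
    have hsub : A' (v - w) = 0 := by rw [map_sub, hvw, sub_self]
    have hcomp : ∀ j, A' (v - w) j = 0 := fun j => by rw [hsub]; rfl
    have hoff : ∀ j, j ≠ i₀ → (v - w) j = 0 := by
      intro j hj
      have := hcomp j
      simpa [hA', ContinuousLinearMap.pi_apply, if_neg hj] using this
    have hrepr : v - w = (v - w) i₀ • (Pi.single i₀ 1 : Fin n → ℂ) := by
      funext j
      by_cases hj : j = i₀
      · subst hj; simp
      · simp [Pi.single_apply, hj, hoff j hj]
    have hdgvw : fderiv ℂ g x₀ (v - w) = 0 := by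
      have := hcomp i₀
      simpa [hA', ContinuousLinearMap.pi_apply] using this
    rw [hrepr, map_smul] at hdgvw
    have : (v - w) i₀ = 0 := by
      rcases (by simpa [smul_eq_mul, mul_eq_zero] using hdgvw :
          v i₀ - w i₀ = 0 ∨ (fderiv ℂ g x₀) (Pi.single i₀ 1) = 0) with h1 | h1
      · simpa using h1
      · exact absurd h1 hi₀
    have : v - w = 0 := by rw [hrepr, this, zero_smul]
    exact sub_eq_zero.1 this
  have hsurj : Function.Surjective A' :=
    (LinearMap.injective_iff_surjective (f := (A' : (Fin n → ℂ) →ₗ[ℂ] Fin n → ℂ))).1 hinj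
  set ilin := LinearEquiv.ofBijective (A' : (Fin n → ℂ) →ₗ[ℂ] Fin n → ℂ) ⟨hinj, hsurj⟩ with hilin
  set i := ilin.toContinuousLinearEquiv with hidef
  have hicoe : (i : (Fin n → ℂ) →L[ℂ] (Fin n → ℂ)) = A' := by ext v; rfl
  have hfdΦ : fderiv ℂ Φ x₀ = A' := hfd'.fderiv
  have hstrict' : HasStrictFDerivAt Φ
      (i : (Fin n → ℂ) →L[ℂ] (Fin n → ℂ)) x₀ := by
    rw [hicoe, ← hfdΦ]
    exact hΦ.hasStrictFDerivAt
  set f := hstrict'.toOpenPartialHomeomorph Φ with hf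
  have hfcoe : ⇑f = Φ := hstrict'.toOpenPartialHomeomorph_coe
  have hx₀src : x₀ ∈ f.source := hstrict'.mem_toOpenPartialHomeomorph_source
  set y₀ := Φ x₀ with hy₀
  have hy₀tgt : y₀ ∈ f.target := by
    have := hstrict'.image_mem_toOpenPartialHomeomorph_target
    exact this
  have hy₀i₀ : y₀ i₀ = 0 := by simp [hy₀, hΦdef, hgx₀]
  have hsymm : AnalyticAt ℂ f.symm y₀ := by
    have h1 : AnalyticAt ℂ f x₀ := by rw [hfcoe]; exact hΦ
    have h2 : fderiv ℂ f x₀ = (i : (Fin n → ℂ) →L[ℂ] (Fin n → ℂ)) := by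
      rw [hfcoe, hfdΦ, hicoe]
    have := f.analyticAt_symm' hx₀src h1 h2
    rwa [show f x₀ = y₀ from by rw [hfcoe]] at this
  have hfsymmx₀ : f.symm y₀ = x₀ := by
    have := f.left_inv hx₀src
    rwa [hfcoe] at this
  -- a good radius
  have hN : f.target ∩ {y | AnalyticAt ℂ f.symm y} ∩ f.symm ⁻¹' U ∈ 𝓝 y₀ := by
    refine inter_mem (inter_mem (f.open_target.mem_nhds hy₀tgt) hsymm.eventually_analyticAt) ?_
    refine (f.symm.continuousAt ?_).preimage_mem_nhds ?_
    · rw [OpenPartialHomeomorph.symm_source]; exact hy₀tgt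
    · simpa only [OpenPartialHomeomorph.coe_coe, hfsymmx₀] using hU.mem_nhds hx₀U
  obtain ⟨r, hr0, hball⟩ := Metric.mem_nhds_iff.1 hN
  have hballtgt : ball y₀ r ⊆ f.target := fun y hy => (hball hy).1.1
  have hballsym : ∀ y ∈ ball y₀ r, AnalyticAt ℂ f.symm y := fun y hy => (hball hy).1.2
  have hballU : ∀ y ∈ ball y₀ r, f.symm y ∈ U := fun y hy => (hball hy).2
  have hgfsymm : ∀ y ∈ ball y₀ r, g (f.symm y) = y i₀ := by
    intro y hy
    have h1 : Φ (f.symm y) = y := by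
      have := f.right_inv (hballtgt hy)
      rwa [hfcoe] at this
    calc g (f.symm y) = Φ (f.symm y) i₀ := by simp [hΦdef]
      _ = y i₀ := by rw [h1]
  -- the projection onto the slice
  set πC : (Fin n → ℂ) →L[ℂ] (Fin n → ℂ) := ContinuousLinearMap.pi
    (fun j => if j = i₀ then 0 else ContinuousLinearMap.proj j) with hπC
  have hπval : ∀ y j, πC y j = if j = i₀ then 0 else y j := by
    intro y j
    by_cases hj : j = i₀ <;> simp [hπC, ContinuousLinearMap.pi_apply, hj]
  have hπball : ∀ y ∈ ball y₀ r, πC y ∈ ball y₀ r := by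
    intro y hy
    rw [mem_ball, dist_pi_lt_iff hr0]
    intro j
    by_cases hj : j = i₀
    · subst hj
      rw [hπval]
      simp [hy₀i₀, hr0]
    · rw [hπval, if_neg hj]
      exact lt_of_le_of_lt (dist_le_pi_dist y y₀ j) (mem_ball.1 hy)
  have hDsym : ∀ y ∈ ball y₀ r, f.symm (πC y) ∈ D := by
    intro y hy
    have h1 := hπball y hy
    rw [hD]
    refine ⟨hballU _ h1, ?_⟩
    rw [hgfsymm _ h1, hπval]
    simp
  set H : (Fin n → ℂ) → ℂ := fun y => h (f.symm (πC y)) with hH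
  have HA : AnalyticOnNhd ℂ H (ball y₀ r) := by
    intro y hy
    have h1 := hπball y hy
    have hcomp : AnalyticAt ℂ (h ∘ (⇑f.symm ∘ ⇑πC)) y :=
      AnalyticAt.comp (x := y) (hh _ (hballU _ h1)) ((hballsym _ h1).comp (πC.analyticAt y))
    exact hcomp
  -- a nearby point of A
  have ht : f.source ∩ Φ ⁻¹' (ball y₀ r) ∈ 𝓝 x₀ := by
    refine inter_mem (f.open_source.mem_nhds hx₀src) ?_
    exact hΦ.continuousAt.preimage_mem_nhds (ball_mem_nhds _ hr0)
  obtain ⟨a, ⟨⟨hasrc, haball⟩, haD, v, hv, hv0⟩⟩ :=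
    mem_closure_iff_nhds.1 hx₀cl _ ht
  have hga : g a = 0 := by rw [hD] at haD; exact haD.2
  have hπΦa : πC (Φ a) = Φ a := by
    funext j
    rw [hπval]
    by_cases hj : j = i₀
    · subst hj; simp [hΦdef, hga]
    · rw [if_neg hj]
  have hqa : f.symm (πC (Φ a)) = a := by
    rw [hπΦa]
    have := f.left_inv hasrc
    rwa [hfcoe] at this
  have Hvan : H =ᶠ[𝓝 (Φ a)] 0 := by
    have hqcont : ContinuousAt (fun y => f.symm (πC y)) (Φ a) := by
      refine ContinuousAt.comp ?_ πC.continuous.continuousAt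
      rw [hπΦa]
      exact f.symm.continuousAt (by rw [OpenPartialHomeomorph.symm_source]; exact hballtgt haball)
    have hv' : (fun y => f.symm (πC y)) ⁻¹' v ∈ 𝓝 (Φ a) :=
      hqcont.preimage_mem_nhds (by rw [hqa]; exact hv)
    have hballn : ball y₀ r ∈ 𝓝 (Φ a) := isOpen_ball.mem_nhds haball
    filter_upwards [hv', hballn] with y hyv hyb
    exact hv0 _ ⟨hyv, hDsym y hyb⟩
  have heq : EqOn H 0 (ball y₀ r) :=
    HA.eqOn_zero_of_preconnected_of_eventuallyEq_zero
      (convex_ball y₀ r).isPreconnected haball Hvan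
  -- conclude
  refine ⟨hx₀D, f.source ∩ Φ ⁻¹' (ball y₀ r), ht, ?_⟩
  rintro y ⟨⟨hysrc, hyball⟩, hyD⟩
  have hgy : g y = 0 := by rw [hD] at hyD; exact hyD.2
  have hπΦy : πC (Φ y) = Φ y := by
    funext j
    rw [hπval]
    by_cases hj : j = i₀
    · subst hj; simp [hΦdef, hgy]
    · rw [if_neg hj]
  have : H (Φ y) = h y := by
    rw [hH]
    simp only
    rw [hπΦy]
    have := f.left_inv hysrc
    rw [hfcoe] at this
    rw [this]
  rw [← this]
  exact heq hyball

/-- Identity-theorem based density: if an analytic function does not vanish identically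
on the connected smooth hypersurface `D`, its nonvanishing locus is dense in `D`. -/
theorem dense_nonzero {n : ℕ} {U : Set (Fin n → ℂ)} (hU : IsOpen U)
    {g : (Fin n → ℂ) → ℂ} (hg : AnalyticOnNhd ℂ g U)
    {h : (Fin n → ℂ) → ℂ} (hh : AnalyticOnNhd ℂ h U)
    {D : Set (Fin n → ℂ)} (hD : D = {x ∈ U | g x = 0})
    (hDconn : IsPreconnected D)
    (hreg : ∀ x ∈ D, fderiv ℂ g x ≠ 0)
    (hne : ∃ x ∈ D, h x ≠ 0) :
    ∀ x ∈ D, x ∈ closure {y | y ∈ D ∧ h y ≠ 0} := by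
  set A := {x | x ∈ D ∧ ∃ v ∈ 𝓝 x, ∀ y ∈ v ∩ D, h y = 0} with hA
  have hAzero : ∀ x ∈ A, h x = 0 := by
    rintro x ⟨hxD, v, hv, hv0⟩
    exact hv0 x ⟨mem_of_mem_nhds hv, hxD⟩
  have hclosed : ∀ x ∈ D, x ∈ closure A → x ∈ A := fun x hxD hxcl =>
    vanishing_propagates hU hg hh hD hxD (hreg x hxD) hxcl
  have hAempty : A = ∅ := by
    by_contra hne'
    obtain ⟨x₀, hx₀⟩ := Set.nonempty_iff_ne_empty.2 hne'
    set u := ⋃₀ {v | IsOpen v ∧ ∀ y ∈ v ∩ D, h y = 0} with hu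
    have hu_open : IsOpen u := isOpen_sUnion (fun v hv => hv.1)
    have hAu : A = D ∩ u := by
      ext x
      constructor
      · rintro ⟨hxD, v, hv, hv0⟩
        refine ⟨hxD, interior v, ⟨isOpen_interior,
          fun y hy => hv0 y ⟨interior_subset hy.1, hy.2⟩⟩, mem_interior_iff_mem_nhds.2 hv⟩
      · rintro ⟨hxD, v, ⟨hvo, hv0⟩, hxv⟩
        exact ⟨hxD, v, hvo.mem_nhds hxv, hv0⟩
    set w := (closure A)ᶜ with hw
    have hw_open : IsOpen w := isClosed_closure.isOpen_compl
    have hcover : D ⊆ u ∪ w := by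
      intro x hxD
      by_cases hx : x ∈ closure A
      · left
        have := hclosed x hxD hx
        rw [hAu] at this
        exact this.2
      · right; exact hx
    have h1 : (D ∩ u).Nonempty := ⟨x₀, by rwa [← hAu]⟩
    have h2 : (D ∩ w).Nonempty := by
      obtain ⟨x₁, hx₁D, hx₁⟩ := hne
      refine ⟨x₁, hx₁D, ?_⟩
      intro hx₁cl
      exact hx₁ (hAzero x₁ (hclosed x₁ hx₁D hx₁cl))
    obtain ⟨z, hzD, hzu, hzw⟩ := hDconn u w hu_open hw_open hcover h1 h2
    exact hzw (subset_closure (by rw [hAu]; exact ⟨hzD, hzu⟩))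
  intro x hxD
  rw [mem_closure_iff_nhds]
  intro t ht
  by_contra hcon
  have hxA : x ∈ A := by
    refine ⟨hxD, t, ht, ?_⟩
    intro y hy
    by_contra hy0
    exact hcon ⟨y, hy.1, hy.2, hy0⟩
  rw [hAempty] at hxA
  exact hxA


end Auxiliary

open Filter Set Topology in
theorem leaf_through_generic_point_meets_divisor_once
    (n : ℕ) (U : Set (Fin n → ℂ)) (hU : IsOpen U)
    (Z : (Fin n → ℂ) → (Fin n → ℂ)) (hZ : AnalyticOnNhd ℂ Z U)
    (g : (Fin n → ℂ) → ℂ) (hg : AnalyticOnNhd ℂ g U)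
    (D : Set (Fin n → ℂ)) (hD : D = {x ∈ U | g x = 0})
    (hDconn : IsPreconnected D)
    (hreg : ∀ x ∈ D, fderiv ℂ g x ≠ 0)
    (hnotinv : ∃ x ∈ D, fderiv ℂ g x (Z x) ≠ 0) :
    ∀ x ∈ D, x ∈ closure
      {e₀ | e₀ ∈ D ∧ Z e₀ ≠ 0 ∧
        ∃ ε > (0 : ℝ), ∃ γ : ℂ → (Fin n → ℂ),
          γ 0 = e₀ ∧
          (∀ t ∈ ball (0 : ℂ) ε, γ t ∈ U ∧ HasDerivAt γ (Z (γ t)) t) ∧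
          (∀ t ∈ ball (0 : ℂ) ε, γ t ∈ D → γ t = e₀)} := by
  classical
  set h : (Fin n → ℂ) → ℂ := fun x => fderiv ℂ g x (Z x) with hhdef
  have hfd : AnalyticOnNhd ℂ (fderiv ℂ g) U := hg.fderiv
  have hh : AnalyticOnNhd ℂ h U := by
    intro x hx
    have hb := (ContinuousLinearMap.apply ℂ ℂ
      (E := Fin n → ℂ)).analyticAt_bilinear (Z x, fderiv ℂ g x)
    have hpair : AnalyticAt ℂ (fun y => (Z y, fderiv ℂ g y)) x := (hZ x hx).prod (hfd x hx)
    have := AnalyticAt.comp (x := x) hb hpair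
    exact this
  have hdense := dense_nonzero hU hg hh hD hDconn hreg hnotinv
  intro x hxD
  refine closure_mono ?_ (hdense x hxD)
  rintro e₀ ⟨he₀D, hhe₀⟩
  have he₀U : e₀ ∈ U := by rw [hD] at he₀D; exact he₀D.1
  have hge₀ : g e₀ = 0 := by rw [hD] at he₀D; exact he₀D.2
  have hne0 : fderiv ℂ g e₀ (Z e₀) ≠ 0 := hhe₀
  have hZne : Z e₀ ≠ 0 := by
    intro h0
    apply hne0
    rw [h0, map_zero]
  obtain ⟨ε, hε0, γ, hγ0, hγ⟩ := exists_holomorphic_integral_curve hU hZ he₀U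
  have hγd0 : HasDerivAt γ (Z e₀) 0 := by
    have := (hγ 0 (mem_ball_self hε0)).2
    rwa [hγ0] at this
  have hgd : HasFDerivAt g (fderiv ℂ g e₀) (γ 0) := by
    rw [hγ0]
    exact (hg e₀ he₀U).differentiableAt.hasFDerivAt
  have hφd : HasDerivAt (fun t => g (γ t)) (fderiv ℂ g e₀ (Z e₀)) 0 :=
    hgd.comp_hasDerivAt 0 hγd0
  have hslope := hasDerivAt_iff_tendsto_slope.1 hφd
  have hev : ∀ᶠ t in 𝓝[≠] (0:ℂ), slope (fun t => g (γ t)) 0 t ≠ 0 :=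
    hslope.eventually_ne hne0
  rw [eventually_nhdsWithin_iff] at hev
  obtain ⟨δ, hδ0, hδ⟩ := Metric.eventually_nhds_iff.1 hev
  refine ⟨he₀D, hZne, min ε δ, lt_min hε0 hδ0, γ, hγ0, ?_, ?_⟩
  · intro t ht
    exact hγ t (ball_subset_ball (min_le_left _ _) ht)
  · intro t ht htD
    have hgt : g (γ t) = 0 := by rw [hD] at htD; exact htD.2
    by_cases h0 : t = 0
    · rw [h0, hγ0]
    · exfalso
      have hdist : dist t 0 < δ := lt_of_lt_of_le (mem_ball.1 ht) (min_le_right _ _)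
      have := hδ hdist (by simpa using h0)
      apply this
      have hg0 : g (γ 0) = 0 := by rw [hγ0]; exact hge₀
      simp [slope_def_field, hgt, hg0]
end

section
/- Let ∇ be a holomorphic branched affine connection on a pair (M,D), i.e., a meromorphic affine connection on TM with poles at D that preserves a locally free submodule E with TM ⊂ E ⊂ TM(*D) of full rank. Then the submodule E is unique. -/
open Set Filter ContinuousLinearMap
open scoped Topology Classical

set_option linter.unusedSectionVars false

namespace BU

variable {E F : Type*} [NormedAddCommGroup E] [NormedSpace ℂ E]
  [NormedAddCommGroup F] [NormedSpace ℂ F] [CompleteSpace F]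

/-- evaluate-at-`v` of the derivative, as an analytic function -/
lemma analyticOnNhd_fderiv_apply {f : E → F} {s : Set E} (hf : AnalyticOnNhd ℂ f s)
    (v : E) : AnalyticOnNhd ℂ (fun x => fderiv ℂ f x v) s := by
  have := (ContinuousLinearMap.apply ℂ F v).comp_analyticOnNhd hf.fderiv
  exact this

/-- pointwise product (composition) of CLM-valued analytic functions is analytic -/
lemma analyticOnNhd_mul {c d : E → F →L[ℂ] F} {s : Set E} (hc : AnalyticOnNhd ℂ c s)
    (hd : AnalyticOnNhd ℂ d s) : AnalyticOnNhd ℂ (fun x => c x * d x) s :=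
  fun x hx => (hc x hx).mul (hd x hx)

/-- derivative of a product of CLM-valued functions, applied to a vector -/
lemma fderiv_mul_apply {c d : E → F →L[ℂ] F} {x : E} (hc : DifferentiableAt ℂ c x)
    (hd : DifferentiableAt ℂ d x) (w : E) :
    fderiv ℂ (fun y => c y * d y) x w = c x * fderiv ℂ d x w + fderiv ℂ c x w * d x := by
  have h := fderiv_clm_comp hc hd (𝕜 := ℂ)
  have : fderiv ℂ (fun y => c y * d y) x = fderiv ℂ (fun y => (c y).comp (d y)) x := rfl
  rw [this, h]
  simp [ContinuousLinearMap.mul_def]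


/-- iterated directional derivative -/
noncomputable def dirIter (v : E) (f : E → ℂ) : ℕ → E → ℂ
  | 0 => f
  | (i+1) => fun x => fderiv ℂ (dirIter v f i) x v

/-- iterated "covariant derivative" type operator -/
noncomputable def opIter (v : E) (B : E → E →L[ℂ] (F →L[ℂ] F)) (S : E → F →L[ℂ] F) :
    ℕ → E → F →L[ℂ] F
  | 0 => S
  | (i+1) => fun x => fderiv ℂ (opIter v B S i) x v + B x v * opIter v B S i x

lemma analyticOnNhd_apply_const {B : E → E →L[ℂ] F} {s : Set E}
    (hB : AnalyticOnNhd ℂ B s) (v : E) : AnalyticOnNhd ℂ (fun x => B x v) s := by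
  have h := (ContinuousLinearMap.apply ℂ F v).comp_analyticOnNhd hB
  exact fun x hx => (h x hx).congr (Filter.Eventually.of_forall fun y => rfl)

lemma dirIter_analytic {v : E} {f : E → ℂ} {s : Set E} (hf : AnalyticOnNhd ℂ f s) :
    ∀ i, AnalyticOnNhd ℂ (dirIter v f i) s := by
  intro i
  induction i with
  | zero => exact hf
  | succ i ih => exact analyticOnNhd_apply_const ih.fderiv v

lemma opIter_analytic {v : E} {B : E → E →L[ℂ] (F →L[ℂ] F)} {S : E → F →L[ℂ] F} {s : Set E}
    (hB : AnalyticOnNhd ℂ B s) (hS : AnalyticOnNhd ℂ S s) :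
    ∀ i, AnalyticOnNhd ℂ (opIter v B S i) s := by
  intro i
  induction i with
  | zero => exact hS
  | succ i ih =>
    refine AnalyticOnNhd.add ?_ ?_
    · exact analyticOnNhd_apply_const ih.fderiv v
    · exact fun x hx => ((analyticOnNhd_apply_const hB v) x hx).mul (ih x hx)

/-- chain rule along the line `t ↦ x₀ + t • v` -/
lemma dirIter_line_deriv {v : E} {f : E → ℂ} {s : Set E} (hf : AnalyticOnNhd ℂ f s)
    (x₀ : E) (i : ℕ) {t : ℂ} (ht : x₀ + t • v ∈ s) :
    HasDerivAt (fun τ : ℂ => dirIter v f i (x₀ + τ • v)) (dirIter v f (i+1) (x₀ + t • v)) t := by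
  have h1 : HasDerivAt (fun τ : ℂ => x₀ + τ • v) v t := by
    simpa using ((hasDerivAt_id t).smul_const v).const_add x₀
  have h2 : HasFDerivAt (dirIter v f i) (fderiv ℂ (dirIter v f i) (x₀ + t • v)) (x₀ + t • v) :=
    ((dirIter_analytic hf i) _ ht).differentiableAt.hasFDerivAt
  exact h2.comp_hasDerivAt t h1

/-- 1-D: iterated derivative sequence of `t^j * u t` with `u 0 ≠ 0` -/
lemma oneD_order (j : ℕ) : ∀ (ψ : ℕ → ℂ → ℂ) (u : ℂ → ℂ), AnalyticAt ℂ u 0 → u 0 ≠ 0 →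
    (∀ i, ∀ᶠ t in 𝓝 (0:ℂ), HasDerivAt (ψ i) (ψ (i+1) t) t) →
    (ψ 0 =ᶠ[𝓝 (0:ℂ)] fun t => t ^ j * u t) →
    (∀ i < j, ψ i 0 = 0) ∧ ψ j 0 ≠ 0 := by
  induction j with
  | zero =>
    intro ψ u hu hu0 hd hev
    refine ⟨fun i hi => absurd hi (Nat.not_lt_zero i), ?_⟩
    have h := hev.self_of_nhds
    simp only [pow_zero, one_mul] at h
    rw [h]; exact hu0
  | succ j ih =>
    intro ψ u hu hu0 hd hev
    -- u is eventually analytic and differentiable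
    have huev : ∀ᶠ t in 𝓝 (0:ℂ), AnalyticAt ℂ u t := hu.eventually_analyticAt
    -- the derivative of ψ 0
    have hψ1 : ψ 1 =ᶠ[𝓝 (0:ℂ)] fun t => t ^ j * (((j:ℂ)+1) * u t + t * deriv u t) := by
      have e1 : ∀ᶠ t in 𝓝 (0:ℂ), ψ 1 t = deriv (ψ 0) t := (hd 0).mono fun t h => h.deriv.symm
      have e2 : deriv (ψ 0) =ᶠ[𝓝 (0:ℂ)] deriv (fun t => t ^ (j+1) * u t) := hev.deriv
      have e3 : ∀ᶠ t in 𝓝 (0:ℂ), deriv (fun t => t ^ (j+1) * u t) t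
          = t ^ j * (((j:ℂ)+1) * u t + t * deriv u t) := by
        filter_upwards [huev] with t ht
        have hdu : DifferentiableAt ℂ u t := ht.differentiableAt
        rw [deriv_fun_mul (by fun_prop) hdu, deriv_pow_field]
        simp only [show j + 1 - 1 = j from by omega, show 1 + j - 1 = j from by omega]
        push_cast
        ring
      filter_upwards [e1, e2, e3] with t h1 h2 h3
      rw [h1, h2, h3]
    -- the shifted sequence
    have hder : AnalyticAt ℂ (deriv u) 0 := by
      have : AnalyticOnNhd ℂ u {y | AnalyticAt ℂ u y} := fun y hy => hy
      exact this.deriv _ hu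
    have hu' : AnalyticAt ℂ (fun t => ((j:ℂ)+1) * u t + t * deriv u t) 0 := by
      exact ((analyticAt_const.mul hu).add (analyticAt_id.mul hder))
    have hu'0 : (fun t => ((j:ℂ)+1) * u t + t * deriv u t) 0 ≠ 0 := by
      show ((j:ℂ)+1) * u 0 + 0 * deriv u 0 ≠ 0
      simp only [zero_mul, add_zero]
      exact mul_ne_zero (Nat.cast_add_one_ne_zero j) hu0
    obtain ⟨h1, h2⟩ := ih (fun i => ψ (i+1)) _ hu' hu'0
      (fun i => hd (i+1)) hψ1
    refine ⟨fun i hi => ?_, h2⟩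
    match i with
    | 0 => simpa using hev.self_of_nhds
    | (i+1) => exact h1 i (by omega)


section Pair

variable {U Ω : Set E} {g : E → ℂ}
variable {B₁ B₂ : E → E →L[ℂ] (F →L[ℂ] F)} {b₀ : E → F →L[ℂ] F} {v : E}

/-- pairs (S, S') with S' = b₀ S on Ω are preserved by the covariant iteration -/
lemma opIter_pair (hΩ : IsOpen Ω) (hΩU : Ω ⊆ U)
    (hB₁ : AnalyticOnNhd ℂ B₁ U) (hB₂ : AnalyticOnNhd ℂ B₂ U)
    (hb₀ : AnalyticOnNhd ℂ b₀ Ω)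
    (hderiv : ∀ x ∈ Ω, ∀ w, fderiv ℂ b₀ x w = b₀ x * B₂ x w - B₁ x w * b₀ x)
    {S S' : E → F →L[ℂ] F} (hS : AnalyticOnNhd ℂ S U) (hS' : AnalyticOnNhd ℂ S' U)
    (hrel : ∀ x ∈ Ω, S' x = b₀ x * S x) :
    ∀ i, ∀ x ∈ Ω, opIter v B₁ S' i x = b₀ x * opIter v B₂ S i x := by
  intro i
  induction i with
  | zero => exact hrel
  | succ i ih =>
    intro x hx
    have hTan : AnalyticOnNhd ℂ (opIter v B₂ S i) U := opIter_analytic hB₂ hS i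
    have hT2an : AnalyticOnNhd ℂ (opIter v B₁ S' i) U := opIter_analytic hB₁ hS' i
    -- the iterates agree eventually near x
    have hev : opIter v B₁ S' i =ᶠ[𝓝 x] fun y => b₀ y * opIter v B₂ S i y :=
      Filter.eventuallyEq_of_mem (hΩ.mem_nhds hx) (fun y hy => ih y hy)
    have hfd : fderiv ℂ (opIter v B₁ S' i) x = fderiv ℂ (fun y => b₀ y * opIter v B₂ S i y) x :=
      hev.fderiv_eq
    have hmul : fderiv ℂ (fun y => b₀ y * opIter v B₂ S i y) x v
        = b₀ x * fderiv ℂ (opIter v B₂ S i) x v + fderiv ℂ b₀ x v * opIter v B₂ S i x :=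
      fderiv_mul_apply ((hb₀ x hx).differentiableAt) ((hTan x (hΩU hx)).differentiableAt) v
    show fderiv ℂ (opIter v B₁ S' i) x v + B₁ x v * opIter v B₁ S' i x = _
    rw [hfd, hmul, hderiv x hx v, ih x hx]
    show _ = b₀ x * (fderiv ℂ (opIter v B₂ S i) x v + B₂ x v * opIter v B₂ S i x)
    noncomm_ring

/-- the covariant iterates of `g • 1` are `∑ dirIter g i • G i` with `G` analytic, `G s = 1` -/
lemma opIter_rep (hU : IsOpen U) (hB₂ : AnalyticOnNhd ℂ B₂ U) (hg : AnalyticOnNhd ℂ g U) :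
    ∀ s : ℕ, ∃ G : ℕ → E → F →L[ℂ] F, (∀ i, AnalyticOnNhd ℂ (G i) U) ∧ (∀ x, G s x = 1) ∧
      ∀ x ∈ U, opIter v B₂ (fun y => g y • 1) s x
        = ∑ i ∈ Finset.range (s+1), dirIter v g i x • G i x := by
  intro s
  induction s with
  | zero =>
    exact ⟨fun _ _ => 1, fun i => fun x _ => analyticAt_const, fun x => rfl,
      fun x _ => by simp [opIter, dirIter]⟩
  | succ s ih =>
    obtain ⟨G, hGan, hGs, hrep⟩ := ih
    refine ⟨fun i x => (if i ≤ s then fderiv ℂ (G i) x v + B₂ x v * G i x else 0)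
      + (if i = 0 then 0 else G (i-1) x), ?_, ?_, ?_⟩
    · intro i
      refine AnalyticOnNhd.add ?_ ?_
      · split_ifs
        · exact (analyticOnNhd_apply_const (hGan i).fderiv v).add
            (fun x hx => ((analyticOnNhd_apply_const hB₂ v) x hx).mul ((hGan i) x hx))
        · exact fun x _ => analyticAt_const
      · split_ifs
        · exact fun x _ => analyticAt_const
        · exact hGan (i-1)
    · intro x
      simp only [Nat.succ_ne_zero, if_false, Nat.add_sub_cancel, hGs x,
        if_neg (by omega : ¬ s + 1 ≤ s), zero_add]
    · intro x hx
      -- derivative of the sum representation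
      have hev : opIter v B₂ (fun y => g y • 1) s =ᶠ[𝓝 x]
          (fun y => ∑ i ∈ Finset.range (s+1), dirIter v g i y • G i y) :=
        Filter.eventuallyEq_of_mem (hU.mem_nhds hx) (fun y hy => hrep y hy)
      have hterm : ∀ i ∈ Finset.range (s+1), HasFDerivAt (fun y => dirIter v g i y • G i y)
          ((dirIter v g i x) • (fderiv ℂ (G i) x)
            + (fderiv ℂ (dirIter v g i) x).smulRight (G i x)) x :=
        fun i _ => HasFDerivAt.smul
          (((dirIter_analytic hg i) x hx).differentiableAt.hasFDerivAt)
          (((hGan i) x hx).differentiableAt.hasFDerivAt)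
      have hsum := HasFDerivAt.fun_sum hterm
      show fderiv ℂ (opIter v B₂ (fun y => g y • 1) s) x v
          + B₂ x v * opIter v B₂ (fun y => g y • 1) s x = _
      rw [hev.fderiv_eq, hsum.fderiv, hrep x hx, Finset.mul_sum]
      have key : ∀ i, fderiv ℂ (dirIter v g i) x v = dirIter v g (i+1) x := fun i => rfl
      simp only [ContinuousLinearMap.sum_apply, ContinuousLinearMap.add_apply,
        ContinuousLinearMap.smul_apply, ContinuousLinearMap.smulRight_apply,
        mul_smul_comm, key]
      rw [Finset.sum_add_distrib]
      have hR : ∑ i ∈ Finset.range (s+1+1), dirIter v g i x •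
            ((if i ≤ s then fderiv ℂ (G i) x v + B₂ x v * G i x else 0)
              + (if i = 0 then 0 else G (i-1) x))
          = (∑ i ∈ Finset.range (s+1), dirIter v g i x • (fderiv ℂ (G i) x v + B₂ x v * G i x))
            + ∑ i ∈ Finset.range (s+1), dirIter v g (i+1) x • G i x := by
        simp only [smul_add]
        rw [Finset.sum_add_distrib]
        congr 1
        · rw [Finset.sum_range_succ, if_neg (by omega : ¬ s+1 ≤ s), smul_zero, add_zero]
          exact Finset.sum_congr rfl fun i hi =>
            by rw [if_pos (by simpa [Nat.lt_succ_iff] using Finset.mem_range.mp hi), smul_add]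
        · rw [Finset.sum_range_succ']
          simp
      rw [hR]
      simp only [smul_add]
      rw [Finset.sum_add_distrib]
      abel

/-- Local analytic extension of `b₀` near a point where `g^k` is not locally zero. -/
lemma local_ext (hU : IsOpen U) (hg : AnalyticOnNhd ℂ g U)
    (hΩdef : Ω = {x ∈ U | g x ≠ 0})
    (hB₁ : AnalyticOnNhd ℂ B₁ U) (hB₂ : AnalyticOnNhd ℂ B₂ U)
    (hb₀ : AnalyticOnNhd ℂ b₀ Ω)
    (hderiv : ∀ x ∈ Ω, ∀ w, fderiv ℂ b₀ x w = b₀ x * B₂ x w - B₁ x w * b₀ x)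
    (k : ℕ) (H : E → F →L[ℂ] F) (hH : AnalyticOnNhd ℂ H U)
    (hHb : ∀ x ∈ Ω, H x = g x ^ k • b₀ x)
    (x₀ : E) (hx₀ : x₀ ∈ U) (hnev : ¬ ((fun x => g x ^ k) =ᶠ[𝓝 x₀] 0)) :
    ∃ N, IsOpen N ∧ x₀ ∈ N ∧ N ⊆ U ∧
      ∃ bloc : E → F →L[ℂ] F, AnalyticOnNhd ℂ bloc N ∧ ∀ y ∈ N ∩ Ω, bloc y = b₀ y := by
  have hΩopen : IsOpen Ω := by
    rw [hΩdef]
    exact (hg.continuousOn (E := E)).isOpen_inter_preimage hU isOpen_compl_singleton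
  have hΩU : Ω ⊆ U := by rw [hΩdef]; exact fun x hx => hx.1
  set f : E → ℂ := fun x => g x ^ k with hfdef
  have hf : AnalyticOnNhd ℂ f U := fun x hx => (hg x hx).pow k
  -- a ball around x₀ inside U
  obtain ⟨ε, hεpos, hball⟩ := Metric.isOpen_iff.mp hU x₀ hx₀
  -- a point in the ball where f ≠ 0
  obtain ⟨y, hyf', hyball⟩ :=
    ((Filter.not_eventually.mp hnev).and_eventually
      ((Metric.ball_mem_nhds x₀ hεpos : ∀ᶠ z in 𝓝 x₀, z ∈ Metric.ball x₀ ε))).exists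
  have hyf : f y ≠ 0 := by simpa using hyf'
  set v : E := y - x₀ with hvdef
  set ℓ : ℂ → E := fun t => x₀ + t • v with hℓdef
  have hℓan : ∀ t, AnalyticAt ℂ ℓ t :=
    fun t => analyticAt_const.add (analyticAt_id.smul analyticAt_const)
  have hℓcont : Continuous ℓ := continuous_const.add (continuous_id.smul continuous_const)
  set T : Set ℂ := ℓ ⁻¹' (Metric.ball x₀ ε) with hTdef
  have hTopen : IsOpen T := Metric.isOpen_ball.preimage hℓcont
  have h0T : (0:ℂ) ∈ T := by
    simp only [hTdef, Set.mem_preimage, hℓdef, zero_smul, add_zero]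
    exact Metric.mem_ball_self hεpos
  have h1T : (1:ℂ) ∈ T := by
    simp only [hTdef, Set.mem_preimage, hℓdef, one_smul, hvdef, add_sub_cancel]
    exact hyball
  have hTconv : Convex ℝ T := by
    intro t₁ h₁ t₂ h₂ a b ha hb hab
    simp only [hTdef, Set.mem_preimage] at h₁ h₂ ⊢
    have hxx : a • x₀ + b • x₀ = x₀ := by rw [← add_smul, hab, one_smul]
    have : ℓ (a • t₁ + b • t₂) = a • ℓ t₁ + b • ℓ t₂ := by
      simp only [hℓdef, smul_add]
      rw [add_smul, smul_assoc, smul_assoc]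
      nth_rewrite 1 [← hxx]
      abel
    rw [this]
    exact (convex_ball x₀ ε) h₁ h₂ ha hb hab
  set φ : ℂ → ℂ := fun t => f (ℓ t) with hφdef
  have hφan : AnalyticOnNhd ℂ φ T := fun t ht =>
    ((hf _ (hball ht)).comp (hℓan t)).congr (Filter.Eventually.of_forall fun τ => rfl)
  have hφ1 : φ 1 ≠ 0 := by
    simpa only [hφdef, hℓdef, one_smul, hvdef, add_sub_cancel] using hyf
  have hφ0 : ¬ (φ =ᶠ[𝓝 (0:ℂ)] 0) := by
    intro h
    exact hφ1 (hφan.eqOn_zero_of_preconnected_of_eventuallyEq_zero hTconv.isPreconnected h0T h h1T)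
  have hφat : AnalyticAt ℂ φ 0 := hφan 0 h0T
  have horder : analyticOrderAt φ 0 ≠ ⊤ := fun h => hφ0 (analyticOrderAt_eq_top.mp h)
  obtain ⟨j, hj⟩ := WithTop.ne_top_iff_exists.mp horder
  obtain ⟨u, huan, hu0, hueq⟩ := (hφat.analyticOrderAt_eq_natCast (n := j)).mp hj.symm
  -- one-dimensional analysis along the line
  have hℓ0 : ℓ 0 = x₀ := by simp [hℓdef]
  have hTnhds : T ∈ 𝓝 (0:ℂ) := hTopen.mem_nhds h0T
  have hd : ∀ i, ∀ᶠ t in 𝓝 (0:ℂ), HasDerivAt (fun τ => dirIter v f i (ℓ τ))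
      (dirIter v f (i+1) (ℓ t)) t := by
    intro i
    filter_upwards [hTnhds] with t ht
    exact dirIter_line_deriv hf x₀ i (hball ht)
  have hvals := oneD_order j (fun i t => dirIter v f i (ℓ t)) u huan hu0 hd
    (by
      apply hueq.mono
      intro t ht
      simp only [smul_eq_mul, sub_zero] at ht; exact ht)
  -- the representation of the iterates of f • 1
  obtain ⟨G, hGan, hGs, hrep⟩ := opIter_rep (v := v) hU hB₂ hf j
  set S : E → F →L[ℂ] F := opIter v B₂ (fun y => f y • 1) j with hSdef
  set S' : E → F →L[ℂ] F := opIter v B₁ H j with hS'def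
  have hSan : AnalyticOnNhd ℂ S U := opIter_analytic hB₂ (fun x hx => (hf x hx).smul analyticAt_const) j
  have hS'an : AnalyticOnNhd ℂ S' U := opIter_analytic hB₁ hH j
  have hpair : ∀ x ∈ Ω, S' x = b₀ x * S x := by
    refine opIter_pair hΩopen hΩU hB₁ hB₂ hb₀ hderiv
      (fun x hx => (hf x hx).smul analyticAt_const) hH ?_ j
    intro x hx
    show _ = b₀ x * (f x • 1)
    rw [hHb x hx, mul_smul_comm, mul_one]
  have hSx₀ : S x₀ = dirIter v f j x₀ • 1 := by
    rw [hrep x₀ hx₀, Finset.sum_eq_single j]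
    · rw [hGs]
    · intro i hi hne
      have h0 := hvals.1 i (by have := Finset.mem_range.mp hi; omega)
      simp only [hℓ0] at h0
      rw [h0, zero_smul]
    · intro h
      exact absurd (Finset.self_mem_range_succ j) h
  have hcne : dirIter v f j x₀ ≠ 0 := by
    have h2 := hvals.2
    simpa [hℓ0] using h2
  have hunit : IsUnit (S x₀) := by
    rw [hSx₀]
    exact ⟨⟨dirIter v f j x₀ • 1, (dirIter v f j x₀)⁻¹ • 1,
      by rw [smul_mul_smul_comm, mul_inv_cancel₀ hcne, one_mul, one_smul],
      by rw [smul_mul_smul_comm, inv_mul_cancel₀ hcne, one_mul, one_smul]⟩, rfl⟩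
  set N : Set E := U ∩ S ⁻¹' {a | IsUnit a} with hNdef
  have hNopen : IsOpen N := by
    refine ContinuousOn.isOpen_inter_preimage ?_ hU Units.isOpen
    exact fun x hx => (hSan x hx).continuousAt.continuousWithinAt
  have hx₀N : x₀ ∈ N := ⟨hx₀, hunit⟩
  refine ⟨N, hNopen, hx₀N, Set.inter_subset_left, fun z => S' z * Ring.inverse (S z), ?_, ?_⟩
  · intro z hz
    have hzu : IsUnit (S z) := hz.2
    have h1 : AnalyticAt ℂ (Ring.inverse ∘ S) z :=
      (hzu.unit_spec ▸ analyticAt_inverse (𝕜 := ℂ) hzu.unit).comp (hSan z hz.1)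
    exact (hS'an z hz.1).mul (h1.congr (Filter.Eventually.of_forall fun _ => rfl))
  · intro z hz
    show S' z * Ring.inverse (S z) = b₀ z
    rw [hpair z hz.2, mul_assoc, Ring.mul_inverse_cancel _ hz.1.2, mul_one]

/-- Global analytic extension of `b₀` from `Ω` to `U`. -/
lemma ext_main (hU : IsOpen U) (hg : AnalyticOnNhd ℂ g U) (hΩdef : Ω = {x ∈ U | g x ≠ 0})
    (hB₁ : AnalyticOnNhd ℂ B₁ U) (hB₂ : AnalyticOnNhd ℂ B₂ U)
    (hb₀ : AnalyticOnNhd ℂ b₀ Ω)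
    (hderiv : ∀ x ∈ Ω, ∀ w, fderiv ℂ b₀ x w = b₀ x * B₂ x w - B₁ x w * b₀ x)
    (k : ℕ) (H : E → F →L[ℂ] F) (hH : AnalyticOnNhd ℂ H U)
    (hHb : ∀ x ∈ Ω, H x = g x ^ k • b₀ x) :
    ∃ b : E → F →L[ℂ] F, AnalyticOnNhd ℂ b U ∧ ∀ x ∈ Ω, b x = b₀ x := by
  have hΩU : Ω ⊆ U := by rw [hΩdef]; exact fun x hx => hx.1
  have hloc : ∀ x ∈ U, ∃ N, IsOpen N ∧ x ∈ N ∧ N ⊆ U ∧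
      ∃ c : E → F →L[ℂ] F, AnalyticOnNhd ℂ c N ∧ ∀ y ∈ N ∩ Ω, c y = b₀ y := by
    intro x hx
    by_cases hev : (fun z => g z ^ k) =ᶠ[𝓝 x] 0
    · obtain ⟨M, hMsub, hMopen, hxM⟩ := mem_nhds_iff.mp hev
      refine ⟨M ∩ U, hMopen.inter hU, ⟨hxM, hx⟩, Set.inter_subset_right, 0,
        fun z _ => analyticAt_const, ?_⟩
      intro z hz
      exfalso
      have hz0 : g z ^ k = (0 : E → ℂ) z := hMsub hz.1.1
      have hzΩ : g z ≠ 0 := by rw [hΩdef] at hz; exact hz.2.2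
      rcases Nat.eq_zero_or_pos k with hk | hk
      · rw [hk] at hz0; simpa using hz0
      · exact hzΩ (pow_eq_zero_iff (by omega)|>.mp hz0)
    · exact local_ext hU hg hΩdef hB₁ hB₂ hb₀ hderiv k H hH hHb x hx hev
  choose! N hNopen hNmem hNsub bl hblan hbleq using hloc
  set O : Set E := {x ∈ U | ∀ᶠ z in 𝓝 x, g z = 0} with hOdef
  have hOopen : IsOpen O := by
    rw [isOpen_iff_mem_nhds]
    intro x hx
    filter_upwards [hU.eventually_mem hx.1, hx.2.eventually_nhds] with z h1 h2
    exact ⟨h1, h2⟩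
  have hOball : ∀ x, x ∈ U → x ∉ O → ∀ r > 0, Metric.ball x r ⊆ U →
      Metric.ball x r ∩ O = ∅ := by
    intro x hxU hxO r hr hsub
    by_contra hne
    obtain ⟨z, hzball, hzO⟩ := Set.nonempty_iff_ne_empty.mpr hne
    have hz : EqOn g 0 (Metric.ball x r) :=
      AnalyticOnNhd.eqOn_zero_of_preconnected_of_eventuallyEq_zero
        (fun w hw => hg w (hsub hw)) (convex_ball x r).isPreconnected hzball hzO.2
    exact hxO ⟨hxU, Filter.eventually_of_mem
      (Metric.isOpen_ball.mem_nhds (Metric.mem_ball_self hr)) hz⟩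
  have hrad : ∀ x, x ∈ U → x ∉ O → ∃ r, 0 < r ∧ Metric.ball x r ⊆ N x ∧
      Metric.ball x r ⊆ U := by
    intro x hx _
    obtain ⟨r, hr, hsub⟩ := Metric.isOpen_iff.mp (hNopen x hx) x (hNmem x hx)
    exact ⟨r, hr, hsub, hsub.trans (hNsub x hx)⟩
  choose! rad hradpos hradN hradU using hrad
  refine ⟨fun x => if x ∈ U ∧ x ∉ O then bl x x else 0, ?_, ?_⟩
  · intro x₀ hx₀
    by_cases hx₀O : x₀ ∈ O
    · have hz : ∀ᶠ z in 𝓝 x₀, (0 : F →L[ℂ] F)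
          = (if z ∈ U ∧ z ∉ O then bl z z else 0) := by
        filter_upwards [hOopen.mem_nhds hx₀O] with z hz
        rw [if_neg (fun h => h.2 hz)]
      exact analyticAt_const.congr hz
    · have hBN : Metric.ball x₀ (rad x₀) ⊆ N x₀ := hradN x₀ hx₀ hx₀O
      have hBU : Metric.ball x₀ (rad x₀) ⊆ U := hradU x₀ hx₀ hx₀O
      have hBO : Metric.ball x₀ (rad x₀) ∩ O = ∅ :=
        hOball x₀ hx₀ hx₀O _ (hradpos x₀ hx₀ hx₀O) hBU
      have hkey : ∀ y ∈ Metric.ball x₀ (rad x₀),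
          bl x₀ y = (if y ∈ U ∧ y ∉ O then bl y y else 0) := by
        intro y hy
        have hyU : y ∈ U := hBU hy
        have hyO : y ∉ O := fun h => (Set.eq_empty_iff_forall_notMem.mp hBO y ⟨hy, h⟩)
        rw [if_pos ⟨hyU, hyO⟩]
        set W := N y ∩ Metric.ball x₀ (rad x₀) with hW
        have hWopen : IsOpen W := (hNopen y hyU).inter Metric.isOpen_ball
        have hyW : y ∈ W := ⟨hNmem y hyU, hy⟩
        have hclos : y ∈ closure (W ∩ Ω) := by
          rw [mem_closure_iff]
          intro o ho hyo
          have honhds : o ∩ W ∈ 𝓝 y := Filter.inter_mem (ho.mem_nhds hyo) (hWopen.mem_nhds hyW)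
          by_contra hempty
          apply hyO
          refine ⟨hyU, ?_⟩
          filter_upwards [honhds] with z hz
          by_contra hgz
          have hzΩ : z ∈ Ω := by rw [hΩdef]; exact ⟨hBU hz.2.2, hgz⟩
          exact hempty ⟨z, hz.1, hz.2, hzΩ⟩
        haveI : (𝓝[W ∩ Ω] y).NeBot := mem_closure_iff_nhdsWithin_neBot.mp hclos
        have h1 : Filter.Tendsto (bl y) (𝓝[W ∩ Ω] y) (𝓝 (bl y y)) :=
          ((hblan y hyU y (hNmem y hyU)).continuousAt).continuousWithinAt.tendsto
        have h2 : Filter.Tendsto (bl x₀) (𝓝[W ∩ Ω] y) (𝓝 (bl x₀ y)) :=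
          ((hblan x₀ hx₀ y (hBN hy)).continuousAt).continuousWithinAt.tendsto
        have heqev : bl y =ᶠ[𝓝[W ∩ Ω] y] bl x₀ := by
          refine eventually_nhdsWithin_of_forall ?_
          intro z hz
          exact (hbleq y hyU z ⟨hz.1.1, hz.2⟩).trans (hbleq x₀ hx₀ z ⟨hBN hz.1.2, hz.2⟩).symm
        exact (tendsto_nhds_unique (h1.congr' heqev) h2).symm
      refine (hblan x₀ hx₀ x₀ (hNmem x₀ hx₀)).congr ?_
      filter_upwards [Metric.ball_mem_nhds x₀ (hradpos x₀ hx₀ hx₀O)] with y hy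
      exact hkey y hy
  · intro x hx
    have hxU : x ∈ U := hΩU hx
    have hxO : x ∉ O := by
      intro h
      have : g x = 0 := h.2.self_of_nhds
      rw [hΩdef] at hx
      exact hx.2 this
    show (if x ∈ U ∧ x ∉ O then bl x x else 0) = b₀ x
    rw [if_pos ⟨hxU, hxO⟩]
    exact hbleq x hxU x ⟨hNmem x hxU, hx⟩

end Pair


section Gauge

variable {E F : Type*} [NormedAddCommGroup E] [NormedSpace ℂ E]
  [NormedAddCommGroup F] [NormedSpace ℂ F] [CompleteSpace F]

/-- the gauge transformation `Qia * Qb` satisfies `d b = b Bb - Ba b` -/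
lemma gauge {Ω : Set E} (hΩopen : IsOpen Ω)
    (A : E → E →L[ℂ] (F →L[ℂ] F)) (Qa Qb Qia Qib : E → F →L[ℂ] F)
    (hQa : AnalyticOnNhd ℂ Qa Ω) (hQb : AnalyticOnNhd ℂ Qb Ω)
    (hQia : AnalyticOnNhd ℂ Qia Ω) (hQib : AnalyticOnNhd ℂ Qib Ω)
    (hinva : ∀ x ∈ Ω, Qa x * Qia x = 1 ∧ Qia x * Qa x = 1)
    (hinvb : ∀ x ∈ Ω, Qb x * Qib x = 1 ∧ Qib x * Qb x = 1)
    (Ba Bb : E → E →L[ℂ] (F →L[ℂ] F))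
    (hBa : ∀ x ∈ Ω, ∀ w, Ba x w = Qia x * fderiv ℂ Qa x w + Qia x * (A x w * Qa x))
    (hBb : ∀ x ∈ Ω, ∀ w, Bb x w = Qib x * fderiv ℂ Qb x w + Qib x * (A x w * Qb x)) :
    ∀ x ∈ Ω, ∀ w, fderiv ℂ (fun y => Qia y * Qb y) x w
      = (Qia x * Qb x) * Bb x w - Ba x w * (Qia x * Qb x) := by
  intro x hx w
  have hda : DifferentiableAt ℂ Qa x := (hQa x hx).differentiableAt
  have hdb : DifferentiableAt ℂ Qb x := (hQb x hx).differentiableAt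
  have hdia : DifferentiableAt ℂ Qia x := (hQia x hx).differentiableAt
  have hp1 : Qa x * Qia x = 1 := (hinva x hx).1
  have hq1 : Qb x * Qib x = 1 := (hinvb x hx).1
  -- derivative of Qia * Qa = 1
  have hev : (fun y => Qia y * Qa y) =ᶠ[𝓝 x] (fun _ => (1 : F →L[ℂ] F)) :=
    Filter.eventuallyEq_of_mem (hΩopen.mem_nhds hx) (fun y hy => (hinva y hy).2)
  have h0 : Qia x * fderiv ℂ Qa x w + fderiv ℂ Qia x w * Qa x = 0 := by
    have := hev.fderiv_eq (𝕜 := ℂ)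
    rw [← fderiv_mul_apply hdia hda w, this, fderiv_fun_const]
    simp
  have h3 : fderiv ℂ Qia x w * Qa x = -(Qia x * fderiv ℂ Qa x w) :=
    eq_neg_of_add_eq_zero_right h0
  have h2 : fderiv ℂ Qia x w = -(Qia x * fderiv ℂ Qa x w) * Qia x := by
    calc fderiv ℂ Qia x w = fderiv ℂ Qia x w * (Qa x * Qia x) := by rw [hp1, mul_one]
      _ = (fderiv ℂ Qia x w * Qa x) * Qia x := by rw [mul_assoc]
      _ = -(Qia x * fderiv ℂ Qa x w) * Qia x := by rw [h3]
  rw [fderiv_mul_apply hdia hdb w, h2, hBa x hx w, hBb x hx w]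
  have e1 : ∀ u : F →L[ℂ] F, (Qia x * Qb x) * (Qib x * u) = Qia x * u := fun u => by
    rw [mul_assoc, ← mul_assoc (Qb x) (Qib x) u, hq1, one_mul]
  have e2 : (Qia x * (A x w * Qa x)) * (Qia x * Qb x) = Qia x * (A x w * Qb x) := by
    calc (Qia x * (A x w * Qa x)) * (Qia x * Qb x)
        = Qia x * ((A x w * Qa x) * (Qia x * Qb x)) := by rw [mul_assoc]
      _ = Qia x * (A x w * (Qa x * (Qia x * Qb x))) := by rw [mul_assoc (A x w)]
      _ = Qia x * (A x w * ((Qa x * Qia x) * Qb x)) := by rw [← mul_assoc (Qa x)]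
      _ = Qia x * (A x w * Qb x) := by rw [hp1, one_mul]
  rw [mul_add, add_mul, e1, e1, e2]
  noncomm_ring

end Gauge

end BU

/-!
STATEMENT 8: Uniqueness of the preserved submodule of a holomorphic branched
affine connection (Lemma 5.5 of the paper).

Local model: `U ⊆ ℂⁿ` open, `D = {g = 0}` the polar divisor, and `∇` a
meromorphic affine connection with Christoffel 1-form `A` (endomorphism
valued), holomorphic on `U ∖ D` and meromorphic along `D`.  A locally free
submodule `E` with `TM ⊆ E ⊆ TM(*D)` is given by a meromorphic frame: an
endomorphism field `Q` (columns = frame), holomorphic and invertible on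
`U ∖ D`, meromorphic along `D`, whose inverse `Qi` is holomorphic on all
of `U` (this is `TM ⊆ E`).  That `∇` restricts to a holomorphic connection
on `E` means that the connection matrix in the frame `Q`, namely
`Q⁻¹ dQ + Q⁻¹ A Q`, extends holomorphically to `U`.

Conclusion: two such frames `Q₁`, `Q₂` define the same submodule, i.e. the
gauge transformation `b = Q₁⁻¹ Q₂` and its inverse `Q₂⁻¹ Q₁` extend
holomorphically to all of `U`.
-/
set_option synthInstance.maxHeartbeats 1000000 in
set_option maxHeartbeats 2000000 in
theorem preserved_submodule_unique
    (n : ℕ) (U : Set (Fin n → ℂ)) (hU : IsOpen U)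
    (g : (Fin n → ℂ) → ℂ) (hg : AnalyticOnNhd ℂ g U)
    (D : Set (Fin n → ℂ)) (hD : D = {x ∈ U | g x = 0})
    -- the meromorphic affine connection
    (A : (Fin n → ℂ) → (Fin n → ℂ) →L[ℂ] ((Fin n → ℂ) →L[ℂ] (Fin n → ℂ)))
    (hA : AnalyticOnNhd ℂ A (U \ D))
    (hAmero : ∃ k : ℕ, ∃ A' , AnalyticOnNhd ℂ A' U ∧
      ∀ x ∈ U \ D, A' x = g x ^ k • A x)
    -- the two frames
    (Q₁ Q₂ Qi₁ Qi₂ : (Fin n → ℂ) → ((Fin n → ℂ) →L[ℂ] (Fin n → ℂ)))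
    (hQ₁ : AnalyticOnNhd ℂ Q₁ (U \ D)) (hQ₂ : AnalyticOnNhd ℂ Q₂ (U \ D))
    (hQ₁mero : ∃ k : ℕ, ∃ Q', AnalyticOnNhd ℂ Q' U ∧
      ∀ x ∈ U \ D, Q' x = g x ^ k • Q₁ x)
    (hQ₂mero : ∃ k : ℕ, ∃ Q', AnalyticOnNhd ℂ Q' U ∧
      ∀ x ∈ U \ D, Q' x = g x ^ k • Q₂ x)
    -- `TM ⊆ E₁, E₂` : the inverse frames are holomorphic on `U`
    (hQi₁ : AnalyticOnNhd ℂ Qi₁ U) (hQi₂ : AnalyticOnNhd ℂ Qi₂ U)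
    (hinv₁ : ∀ x ∈ U \ D, (Q₁ x).comp (Qi₁ x) = ContinuousLinearMap.id ℂ _ ∧
      (Qi₁ x).comp (Q₁ x) = ContinuousLinearMap.id ℂ _)
    (hinv₂ : ∀ x ∈ U \ D, (Q₂ x).comp (Qi₂ x) = ContinuousLinearMap.id ℂ _ ∧
      (Qi₂ x).comp (Q₂ x) = ContinuousLinearMap.id ℂ _)
    -- `∇` restricts to a holomorphic connection on `E₁` and on `E₂`
    (hhol₁ : ∃ B : (Fin n → ℂ) → (Fin n → ℂ) →L[ℂ] ((Fin n → ℂ) →L[ℂ] (Fin n → ℂ)), AnalyticOnNhd ℂ B U ∧ ∀ x ∈ U \ D, ∀ w : Fin n → ℂ,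
      B x w = (Qi₁ x).comp (fderiv ℂ Q₁ x w) + (Qi₁ x).comp ((A x w).comp (Q₁ x)))
    (hhol₂ : ∃ B : (Fin n → ℂ) → (Fin n → ℂ) →L[ℂ] ((Fin n → ℂ) →L[ℂ] (Fin n → ℂ)), AnalyticOnNhd ℂ B U ∧ ∀ x ∈ U \ D, ∀ w : Fin n → ℂ,
      B x w = (Qi₂ x).comp (fderiv ℂ Q₂ x w) + (Qi₂ x).comp ((A x w).comp (Q₂ x))) :
    ∃ b binv : (Fin n → ℂ) → ((Fin n → ℂ) →L[ℂ] (Fin n → ℂ)),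
      AnalyticOnNhd ℂ b U ∧ AnalyticOnNhd ℂ binv U ∧
      ∀ x ∈ U \ D, b x = (Qi₁ x).comp (Q₂ x) ∧ binv x = (Qi₂ x).comp (Q₁ x) := by
  classical
  obtain ⟨k₁, Q₁', hQ₁'an, hQ₁'eq⟩ := hQ₁mero
  obtain ⟨k₂, Q₂', hQ₂'an, hQ₂'eq⟩ := hQ₂mero
  obtain ⟨B₁, hB₁an, hB₁eq⟩ := hhol₁
  obtain ⟨B₂, hB₂an, hB₂eq⟩ := hhol₂
  set Ω := U \ D with hΩ
  have hΩdef : Ω = {x ∈ U | g x ≠ 0} := by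
    rw [hΩ, hD]
    ext x
    simp only [Set.mem_diff, Set.mem_setOf_eq]
    tauto
  have hΩopen : IsOpen Ω := by
    rw [hΩdef]
    exact (hg.continuousOn).isOpen_inter_preimage hU isOpen_compl_singleton
  have hΩU : Ω ⊆ U := Set.diff_subset
  have hinv₁' : ∀ x ∈ Ω, Q₁ x * Qi₁ x = 1 ∧ Qi₁ x * Q₁ x = 1 := fun x hx => hinv₁ x hx
  have hinv₂' : ∀ x ∈ Ω, Q₂ x * Qi₂ x = 1 ∧ Qi₂ x * Q₂ x = 1 := fun x hx => hinv₂ x hx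
  have hB₁eq' : ∀ x ∈ Ω, ∀ w, B₁ x w = Qi₁ x * fderiv ℂ Q₁ x w + Qi₁ x * (A x w * Q₁ x) :=
    fun x hx w => hB₁eq x hx w
  have hB₂eq' : ∀ x ∈ Ω, ∀ w, B₂ x w = Qi₂ x * fderiv ℂ Q₂ x w + Qi₂ x * (A x w * Q₂ x) :=
    fun x hx w => hB₂eq x hx w
  -- direction 1 : b = Qi₁ Q₂
  have hgauge₁ := BU.gauge hΩopen A Q₁ Q₂ Qi₁ Qi₂ hQ₁ hQ₂ (hQi₁.mono hΩU) (hQi₂.mono hΩU)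
    hinv₁' hinv₂' B₁ B₂ hB₁eq' hB₂eq'
  have hHb₁ : ∀ x ∈ Ω, Qi₁ x * Q₂' x = g x ^ k₂ • (Qi₁ x * Q₂ x) := by
    intro x hx
    rw [hQ₂'eq x hx]
    ext w
    simp [ContinuousLinearMap.mul_apply]
  obtain ⟨b, hban, hbeq⟩ := BU.ext_main (b₀ := fun x => Qi₁ x * Q₂ x) hU hg hΩdef hB₁an hB₂an
    (BU.analyticOnNhd_mul (hQi₁.mono hΩU) hQ₂) hgauge₁ k₂ (fun x => Qi₁ x * Q₂' x)
    (BU.analyticOnNhd_mul hQi₁ hQ₂'an) hHb₁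
  -- direction 2 : binv = Qi₂ Q₁
  have hgauge₂ := BU.gauge hΩopen A Q₂ Q₁ Qi₂ Qi₁ hQ₂ hQ₁ (hQi₂.mono hΩU) (hQi₁.mono hΩU)
    hinv₂' hinv₁' B₂ B₁ hB₂eq' hB₁eq'
  have hHb₂ : ∀ x ∈ Ω, Qi₂ x * Q₁' x = g x ^ k₁ • (Qi₂ x * Q₁ x) := by
    intro x hx
    rw [hQ₁'eq x hx]
    ext w
    simp [ContinuousLinearMap.mul_apply]
  obtain ⟨c, hcan, hceq⟩ := BU.ext_main (b₀ := fun x => Qi₂ x * Q₁ x) hU hg hΩdef hB₂an hB₁an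
    (BU.analyticOnNhd_mul (hQi₂.mono hΩU) hQ₁) hgauge₂ k₁ (fun x => Qi₂ x * Q₁' x)
    (BU.analyticOnNhd_mul hQi₂ hQ₁'an) hHb₂
  exact ⟨b, c, hban, hcan, fun x hx => ⟨hbeq x hx, hceq x hx⟩⟩
end

section
/- Let ω₀ be a holomorphic one-form with values in g = g_{-1} ⊕ p on the total space E of a holomorphic P-principal bundle p : E → M, defining a branched holomorphic Cartan geometry with polar (degeneracy) divisor D̃ = p^{-1}(D). For A ∈ g ∖ p, let T_A be the rank-one singular foliation with ω₀(T_A) ⊂ O_E(*D̃)·A. Then T_A is everywhere transverse to ker(dp): any local holomorphic vector field Z generating T_A is nowhere tangent to the fibers of p. -/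
/-!
STATEMENT 10: Lemma 3.17 of the paper (transversality of the distinguished
foliation to the fibers, for branched geometries).

Local model: the total space `E` of the `P`-principal bundle is an open set
`W` of `(Fin n → ℂ) × (Fin m → ℂ)` (base × fiber, local trivialization),
`p = fst`, so `ker(dp)` is `{0} × ℂᵐ`.  The Lie algebra is
`g = g₋₁ ⊕ p ≅ (Fin n → ℂ) × (Fin m → ℂ)` (first factor `g₋₁`, second
factor `p`).  The Cartan connection form `ω₀` is holomorphic on `W`
(branched geometry) and satisfies the axioms of a Cartan connection:
the `g₋₁`-component of `ω₀` vanishes on vertical vectors, and the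
`p`-component of `ω₀` restricted to vertical vectors is a linear
isomorphism (Maurer–Cartan on the fibers); `ω₀` is a pointwise isomorphism
outside the degeneracy divisor `D̃`, whose complement is dense.

For `A ∈ g ∖ p` (i.e. with nonzero `g₋₁`-component `a.1 ≠ 0`), a local
holomorphic generator `Z` of the distinguished foliation `T_A` (`Z`
nonvanishing, with `ω₀(Z) ∈ ℂ·A` at regular points) is nowhere tangent to
the fibers of `p`: `(dp)(Z) = Z.1 ≠ 0` everywhere.
-/
theorem distinguished_foliation_transverse_to_fibers
    (n m : ℕ)
    (W : Set ((Fin n → ℂ) × (Fin m → ℂ))) (hW : IsOpen W)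
    (ω₀ : (Fin n → ℂ) × (Fin m → ℂ) →
      ((Fin n → ℂ) × (Fin m → ℂ)) →L[ℂ] ((Fin n → ℂ) × (Fin m → ℂ)))
    (hω₀ : AnalyticOnNhd ℂ ω₀ W)
    -- the `g₋₁`-component of `ω₀` vanishes on `ker(dp)`
    (hsolder : ∀ x ∈ W, ∀ v : Fin m → ℂ, (ω₀ x (0, v)).1 = 0)
    -- `ω₀` restricts to the Maurer–Cartan form on the fibers
    (hMC : ∀ x ∈ W, Function.Bijective (fun v : Fin m → ℂ => (ω₀ x (0, v)).2))
    -- the degeneracy locus `D̃` of `ω₀` is a proper analytic subset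
    (hdense : ∀ x ∈ W, x ∈ closure {y | y ∈ W ∧ Function.Bijective (ω₀ y)})
    -- `A ∈ g ∖ p`
    (a : (Fin n → ℂ) × (Fin m → ℂ)) (ha : a.1 ≠ 0)
    -- `Z` is a local holomorphic generator of the distinguished foliation `T_A`
    (Z : (Fin n → ℂ) × (Fin m → ℂ) → (Fin n → ℂ) × (Fin m → ℂ))
    (hZ : AnalyticOnNhd ℂ Z W)
    (hZne : ∀ x ∈ W, Z x ≠ 0)
    (hZdir : ∀ x ∈ W, Function.Bijective (ω₀ x) → ∃ c : ℂ, ω₀ x (Z x) = c • a) :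
    ∀ x ∈ W, (Z x).1 ≠ 0 := by
  intro x hx h1
  obtain ⟨i, hi⟩ : ∃ i, a.1 i ≠ 0 := by
    by_contra h; push_neg at h; exact ha (funext h)
  set S : Set ((Fin n → ℂ) × (Fin m → ℂ)) :=
    {y | y ∈ W ∧ Function.Bijective (ω₀ y)} with hS
  set f : (Fin n → ℂ) × (Fin m → ℂ) → (Fin m → ℂ) :=
    fun y => a.1 i • (ω₀ y (Z y)).2 - ((ω₀ y (Z y)).1 i) • a.2 with hf
  have hfS : ∀ y ∈ S, f y = 0 := by
    rintro y ⟨hyW, hyb⟩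
    obtain ⟨c, hc⟩ := hZdir y hyW hyb
    simp only [hf, hc, Prod.smul_snd, Prod.smul_fst, Pi.smul_apply, smul_smul,
      smul_eq_mul]
    rw [mul_comm, sub_self]
  have hg : ContinuousAt (fun y => ω₀ y (Z y)) x :=
    isBoundedBilinearMap_apply.continuous.continuousAt.comp (f := fun y => (ω₀ y, Z y))
      ((hω₀ x hx).continuousAt.prodMk (hZ x hx).continuousAt)
  have h2 : ContinuousAt f x := by
    apply ContinuousAt.sub
    · exact (continuous_snd.continuousAt.comp hg).const_smul (a.1 i)
    · exact (((continuous_apply i).continuousAt.comp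
        (continuous_fst.continuousAt.comp hg))).smul continuousAt_const
  have hne : (nhdsWithin x S).NeBot :=
    mem_closure_iff_nhdsWithin_neBot.mp (hdense x hx)
  have h3 : Filter.Tendsto f (nhdsWithin x S) (nhds (f x)) :=
    (h2.continuousWithinAt).tendsto
  have h4 : Filter.Tendsto f (nhdsWithin x S) (nhds 0) := by
    apply Filter.Tendsto.congr' _ tendsto_const_nhds
    filter_upwards [self_mem_nhdsWithin] with y hy
    exact (hfS y hy).symm
  have hfx : f x = 0 := tendsto_nhds_unique h3 h4
  have hZx : Z x = (0, (Z x).2) := by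
    ext <;> simp [h1]
  have hfirst : (ω₀ x (Z x)).1 = 0 := by
    rw [hZx]; exact hsolder x hx _
  have hsnd : (ω₀ x (Z x)).2 = 0 := by
    have : a.1 i • (ω₀ x (Z x)).2 = 0 := by
      have := sub_eq_zero.mp hfx
      rw [this, hfirst]; simp
    rcases smul_eq_zero.mp this with h | h
    · exact absurd h hi
    · exact h
  have hz2 : (Z x).2 = 0 := by
    have hinj := (hMC x hx).injective
    have e1 : (ω₀ x (0, (Z x).2)).2 = 0 := by rw [← hZx]; exact hsnd
    have e2 : (ω₀ x ((0 : Fin n → ℂ), (0 : Fin m → ℂ))).2 = 0 := by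
      have h0 : ((0 : Fin n → ℂ), (0 : Fin m → ℂ)) = (0 : (Fin n → ℂ) × (Fin m → ℂ)) := rfl
      rw [h0, map_zero]; rfl
    exact hinj (e1.trans e2.symm)
  exact hZne x hx (by rw [hZx, hz2]; rfl)
end
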